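/- Let q be a unit quaternion and let λ be a unit complex number (a quaternion of the form a + b·i with a² + b² = 1). Then q λ q* = i if and only if either (q i q* = i and λ = i) or (q i q* = −i and λ = −i). Equivalently, the preimage of i under the map 𝔮 : S² × S¹ → Sp₁, 𝔮(z, λ) = q λ q* where z = q i q*, is the two-point set {(i, i), (−i, −i)}. -/

import Mathlib

open Quaternion

/-- The quaternion `i`. -/
def quatI : ℍ[ℝ] := ⟨0, 1, 0, 0⟩

/-- For a unit quaternion `q` and a unit complex number `λ = a + b·i`
(`a² + b² = 1`), one has `q λ q* = i` iff either (`q i q* = i` and `λ = i`) or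
(`q i q* = -i` and `λ = -i`).  Equivalently, the preimage of `i` under
`𝔮 : S² × S¹ → Sp₁`, `𝔮(z, λ) = q λ q*` with `z = q i q*`, is
`{(i, i), (-i, -i)}`. -/
theorem frakq_preimage_of_i (q : ℍ[ℝ]) (hq : ‖q‖ = 1)
    (a b : ℝ) (hab : a ^ 2 + b ^ 2 = 1) :
    q * ((a : ℍ[ℝ]) + b • quatI) * star q = quatI ↔
      (q * quatI * star q = quatI ∧ a = 0 ∧ b = 1) ∨
      (q * quatI * star q = -quatI ∧ a = 0 ∧ b = -1) := by
  have hns : Quaternion.normSq q = 1 := by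
    have := Quaternion.normSq_eq_norm_mul_self (a := q)
    rw [hq] at this; simpa using this
  have hq1 : q * star q = 1 := by
    rw [Quaternion.self_mul_star, hns]; norm_num
  set W := q * quatI * star q with hW
  have hexp : q * ((a : ℍ[ℝ]) + b • quatI) * star q = (a : ℍ[ℝ]) + b • W := by
    rw [mul_add, add_mul, mul_smul_comm, smul_mul_assoc, hW]
    congr 1
    calc q * (a : ℍ[ℝ]) * star q = (a : ℍ[ℝ]) * (q * star q) := by
          simp [Quaternion.coe_mul_eq_smul, mul_smul_comm, mul_assoc]
      _ = (a : ℍ[ℝ]) := by rw [hq1, mul_one]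
  have hstarI : star quatI = -quatI := by
    simp [Quaternion.ext_iff]; simp [quatI]
  have hWstar : star W = -W := by
    rw [hW]
    simp only [star_mul, star_star, hstarI]
    simp [mul_assoc]
  have hWre : W.re = 0 := by
    have := congrArg QuaternionAlgebra.re hWstar
    simp only [Quaternion.re_star, Quaternion.re_neg] at this
    linarith
  rw [hexp]
  constructor
  · intro h
    have hre := congrArg QuaternionAlgebra.re h
    simp only [Quaternion.re_add, Quaternion.re_coe, Quaternion.re_smul, hWre,
      smul_eq_mul, mul_zero, add_zero] at hre
    have hIre : (quatI).re = 0 := rfl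
    rw [hIre] at hre
    subst hre
    have hb2 : b ^ 2 = 1 := by nlinarith
    have hbW : b • W = quatI := by
      simpa using h
    rcases mul_self_eq_one_iff.mp (by nlinarith : b * b = 1) with hb | hb
    · subst hb
      exact Or.inl ⟨by simpa using hbW, rfl, rfl⟩
    · subst hb
      refine Or.inr ⟨?_, rfl, rfl⟩
      have : -W = quatI := by simpa using hbW
      exact neg_eq_iff_eq_neg.mp this
  · rintro (⟨hw, ha, hb⟩ | ⟨hw, ha, hb⟩) <;> subst ha <;> subst hb <;>
      simp [hw]
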